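/- If there exists a binary linear [n, k, 8m] code (with m ≤ (n+1)/2, and l ≥ n+1 an odd prime), then there exists a rank-n lattice with center density at least 2^{k-n/2} · m^{n/2} / (l^{m-1} (n+1)^{1/2}). -/

import Mathlib

open Finset

noncomputable def derAt1 (n i : ℕ) : (Fin (n + 1) → ℤ) →ₗ[ℤ] ℤ :=
  ∑ j : Fin (n + 1), (((j : ℕ).descFactorial i : ℤ)) • LinearMap.proj j

noncomputable def rootLat (n : ℕ) : Submodule ℤ (Fin (n + 1) → ℤ) :=
  LinearMap.ker (derAt1 n 0)

open Polynomial

lemma esymm_eq_of_psum_eq {F : Type*} [Field F] (N : ℕ) (x y : Fin N → F)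
    (hchar : ∀ i : ℕ, 0 < i → i ≤ N → (i : F) ≠ 0)
    (hp : ∀ i : ℕ, 0 < i → i ≤ N → ∑ j, x j ^ i = ∑ j, y j ^ i) :
    ∀ kk : ℕ, kk ≤ N → (Multiset.map x univ.val).esymm kk = (Multiset.map y univ.val).esymm kk := by
  intro kk
  induction kk using Nat.strong_induction_on with
  | _ k ih =>
    intro hkN
    rcases Nat.eq_zero_or_pos k with hk0 | hkpos
    · subst hk0; simp [Multiset.esymm]
    have hpsum : ∀ (z : Fin N → F) (j : ℕ),
        MvPolynomial.aeval z (MvPolynomial.psum (Fin N) F j) = ∑ t, z t ^ j := by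
      intro z j; simp [MvPolynomial.psum]
    have hx := congrArg (MvPolynomial.aeval x) (MvPolynomial.mul_esymm_eq_sum (Fin N) F k)
    have hy := congrArg (MvPolynomial.aeval y) (MvPolynomial.mul_esymm_eq_sum (Fin N) F k)
    simp only [map_mul, map_sum, map_pow, map_natCast, map_neg, map_one,
      MvPolynomial.aeval_esymm_eq_multiset_esymm, hpsum] at hx hy
    have hsum : ∑ a ∈ filter (fun a => a.1 < k) (antidiagonal k),
        (-1:F) ^ a.1 * (Multiset.map x univ.val).esymm a.1 * ∑ t, x t ^ a.2
        = ∑ a ∈ filter (fun a => a.1 < k) (antidiagonal k),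
        (-1:F) ^ a.1 * (Multiset.map y univ.val).esymm a.1 * ∑ t, y t ^ a.2 := by
      apply Finset.sum_congr rfl
      intro a ha
      simp only [mem_filter, Finset.HasAntidiagonal.mem_antidiagonal] at ha
      have h1 : a.1 < k := ha.2
      have h2 : a.2 = k - a.1 := by omega
      rw [ih a.1 h1 (by omega), hp a.2 (by omega) (by omega)]
    have hk : (k : F) ≠ 0 := hchar k hkpos hkN
    exact mul_left_cancel₀ hk (by rw [hx, hsum, ← hy])

lemma multiset_eq_of_psum_eq {F : Type*} [Field F] (N : ℕ) (x y : Fin N → F)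
    (hchar : ∀ i : ℕ, 0 < i → i ≤ N → (i : F) ≠ 0)
    (hp : ∀ i : ℕ, 0 < i → i ≤ N → ∑ j, x j ^ i = ∑ j, y j ^ i) :
    Multiset.map x univ.val = Multiset.map y univ.val := by
  have hes := esymm_eq_of_psum_eq N x y hchar hp
  set s := Multiset.map x univ.val with hs
  set t := Multiset.map y univ.val with ht
  have hcs : Multiset.card s = N := by simp [hs]
  have hct : Multiset.card t = N := by simp [ht]
  have hprod : (Multiset.map (fun r => Polynomial.X + Polynomial.C r) s).prod
      = (Multiset.map (fun r => Polynomial.X + Polynomial.C r) t).prod := by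
    rw [Multiset.prod_X_add_C_eq_sum_esymm, Multiset.prod_X_add_C_eq_sum_esymm, hcs, hct]
    apply Finset.sum_congr rfl
    intro j hj
    rw [hes j (by simp at hj; omega)]
  have hroots : ∀ u : Multiset F, (Multiset.map (fun r => Polynomial.X + Polynomial.C r) u).prod.roots
      = u.map (fun a => -a) := by
    intro u
    have : (Multiset.map (fun r => Polynomial.X + Polynomial.C r) u)
        = (Multiset.map (fun a => Polynomial.X - Polynomial.C a) (u.map (fun a => -a))) := by
      rw [Multiset.map_map]; apply Multiset.map_congr rfl; intro a _; simp [sub_neg_eq_add]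
    rw [this, Polynomial.roots_multiset_prod_X_sub_C]
  have := (hroots s).symm.trans ((congrArg Polynomial.roots hprod).trans (hroots t))
  exact Multiset.map_injective (fun a b h => neg_injective h) this

lemma mem_span_descPochhammer {R : Type*} [CommRing R] [Nontrivial R] [NoZeroDivisors R] :
    ∀ (d : ℕ) (P : R[X]), P.degree < (d : ℕ) →
      P ∈ Submodule.span R ((fun t => descPochhammer R t) '' {t | t < d}) := by
  intro d
  induction d with
  | zero =>
    intro P hP
    have : P = 0 := degree_eq_bot.mp (Nat.WithBot.lt_zero_iff.mp (by exact_mod_cast hP))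
    simp [this]
  | succ d ih =>
    intro P hP
    set c := P.coeff d with hc
    set Q := P - C c * descPochhammer R d with hQdef
    have hnd : (descPochhammer R d).natDegree = d := descPochhammer_natDegree R d
    have hQ : Q.degree < (d : ℕ) := by
      rw [degree_lt_iff_coeff_zero]
      intro mm hmm
      rcases eq_or_lt_of_le hmm with heq | hlt
      · subst heq
        simp only [hQdef, coeff_sub, coeff_C_mul]
        have : (descPochhammer R d).coeff d = 1 := by
          have := (monic_descPochhammer R d).leadingCoeff
          rwa [leadingCoeff, hnd] at this
        rw [this, mul_one, ← hc, sub_self]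
      · have h1 : P.coeff mm = 0 := by
          apply coeff_eq_zero_of_degree_lt
          calc P.degree < ((d+1 : ℕ) : WithBot ℕ) := hP
          _ ≤ (mm : WithBot ℕ) := by exact_mod_cast Nat.cast_le.mpr hlt
        have h2 : (descPochhammer R d).coeff mm = 0 :=
          coeff_eq_zero_of_natDegree_lt (by omega)
        simp [hQdef, h1, h2]
    have hQmem := ih Q hQ
    have hmono : Submodule.span R ((fun t => descPochhammer R t) '' {t | t < d})
        ≤ Submodule.span R ((fun t => descPochhammer R t) '' {t | t < d + 1}) :=
      Submodule.span_mono (Set.image_mono (fun t ht => by exact Nat.lt_succ_of_lt ht))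
    have hdmem : descPochhammer R d ∈ Submodule.span R
        ((fun t => descPochhammer R t) '' {t | t < d + 1}) :=
      Submodule.subset_span ⟨d, Nat.lt_succ_self d, rfl⟩
    have : P = Q + c • descPochhammer R d := by
      rw [hQdef, smul_eq_C_mul]; ring
    rw [this]
    exact Submodule.add_mem _ (hmono hQmem) (Submodule.smul_mem _ c hdmem)

lemma derAt1_apply (n i : ℕ) (v : Fin (n+1) → ℤ) :
    derAt1 n i v = ∑ j : Fin (n+1), ((j : ℕ).descFactorial i : ℤ) * v j := by
  simp [derAt1, LinearMap.sum_apply, LinearMap.smul_apply, LinearMap.proj_apply, smul_eq_mul]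

lemma derAt1_zero_apply (n : ℕ) (v : Fin (n+1) → ℤ) : derAt1 n 0 v = ∑ j, v j := by
  simp [derAt1_apply]

-- helper: card of finset sum of multisets
lemma card_finset_sum {β α : Type*} (s : Finset β) (f : β → Multiset α) :
    Multiset.card (∑ j ∈ s, f j) = ∑ j ∈ s, Multiset.card (f j) := by
  classical
  induction s using Finset.induction with
  | empty => simp
  | insert _ _ ha ih => simp [Finset.sum_insert ha, ih]

lemma map_sum_finset_sum {β α γ : Type*} [AddCommMonoid γ] (s : Finset β) (f : β → Multiset α)
    (g : α → γ) : ((∑ j ∈ s, f j).map g).sum = ∑ j ∈ s, ((f j).map g).sum := by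
  classical
  induction s using Finset.induction with
  | empty => simp
  | insert _ _ ha ih => simp [Finset.sum_insert ha, ih]

lemma exists_fn_of_multiset {F : Type*} (N : ℕ) (s : Multiset F) (h : Multiset.card s = N) :
    ∃ x : Fin N → F, Multiset.map x univ.val = s := by
  have hL : s.toList.length = N := by simpa using h
  subst hL
  refine ⟨s.toList.get, ?_⟩
  have h2 : (univ : Finset (Fin s.toList.length)).val = ↑(List.finRange s.toList.length) := rfl
  rw [h2, Multiset.map_coe, ← List.ofFn_eq_map, List.ofFn_get, Multiset.coe_toList]

lemma multiset_eq_of_psum_eq' {F : Type*} [Field F] (N : ℕ) (s t : Multiset F)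
    (hcs : Multiset.card s = N) (hct : Multiset.card t = N)
    (hchar : ∀ i : ℕ, 0 < i → i ≤ N → (i : F) ≠ 0)
    (hp : ∀ i : ℕ, 0 < i → i ≤ N → (s.map (· ^ i)).sum = (t.map (· ^ i)).sum) :
    s = t := by
  obtain ⟨x, hx⟩ := exists_fn_of_multiset N s hcs
  obtain ⟨y, hy⟩ := exists_fn_of_multiset N t hct
  rw [← hx, ← hy]
  apply multiset_eq_of_psum_eq N x y hchar
  intro i hi hiN
  have h1 : ∑ j, x j ^ i = ((Multiset.map x univ.val).map (· ^ i)).sum := by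
    rw [Multiset.map_map]; rfl
  have h2 : ∑ j, y j ^ i = ((Multiset.map y univ.val).map (· ^ i)).sum := by
    rw [Multiset.map_map]; rfl
  rw [h1, h2, hx, hy]
  exact hp i hi hiN

-- power sums vanish given descFactorial sums vanish
lemma psum_zero_of_desc {l : ℕ} [Fact (Nat.Prime l)] {n m : ℕ} (w : Fin (n+1) → ℤ)
    (hdesc : ∀ i : ℕ, i < m → (∑ j : Fin (n+1), ((w j : ZMod l) * ((j : ℕ).descFactorial i : ZMod l))) = 0) :
    ∀ i : ℕ, i < m → ∑ j : Fin (n+1), (w j : ZMod l) * (((j : ℕ) : ZMod l)) ^ i = 0 := by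
  intro i him
  set Φ : Polynomial (ZMod l) →ₗ[ZMod l] ZMod l :=
    ∑ j : Fin (n+1), (w j : ZMod l) • Polynomial.leval (((j : ℕ) : ZMod l)) with hΦ
  have hΦ_apply : ∀ P : Polynomial (ZMod l), Φ P = ∑ j : Fin (n+1), (w j : ZMod l) * P.eval (((j : ℕ) : ZMod l)) := by
    intro P; simp [hΦ, Polynomial.leval_apply, smul_eq_mul]
  have hker : ∀ t : ℕ, t < m → Φ (descPochhammer (ZMod l) t) = 0 := by
    intro t ht
    rw [hΦ_apply]
    have : ∀ j : Fin (n+1), Polynomial.eval (((j:ℕ) : ZMod l)) (descPochhammer (ZMod l) t)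
        = ((j : ℕ).descFactorial t : ZMod l) := fun j => descPochhammer_eval_eq_descFactorial _ _ _
    simp_rw [this]
    exact hdesc t ht
  have hspan : (Polynomial.X : Polynomial (ZMod l)) ^ i ∈
      Submodule.span (ZMod l) ((fun t => descPochhammer (ZMod l) t) '' {t | t < m}) := by
    apply mem_span_descPochhammer
    rw [Polynomial.degree_X_pow]
    exact_mod_cast Nat.cast_lt.mpr him
  have hle : Submodule.span (ZMod l) ((fun t => descPochhammer (ZMod l) t) '' {t | t < m})
      ≤ LinearMap.ker Φ := by
    rw [Submodule.span_le]
    rintro _ ⟨t, ht, rfl⟩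
    exact hker t ht
  have := hle hspan
  rw [LinearMap.mem_ker, hΦ_apply] at this
  simpa using this

lemma craig_bound (n m l : ℕ) (hm : 0 < m) (hm2 : 2 * m ≤ n + 1) (hl : n + 1 ≤ l)
    (hlp : l.Prime) (w : Fin (n+1) → ℤ) (hw : w ≠ 0) (h0 : ∑ j, w j = 0)
    (hmod : ∀ i : ℕ, 0 < i → i < m → ((derAt1 n i w : ℤ) : ZMod l) = 0) :
    (2 * m : ℤ) ≤ ∑ j, (w j) ^ 2 := by
  haveI : Fact (Nat.Prime l) := ⟨hlp⟩
  by_contra hcon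
  push_neg at hcon
  -- per-coordinate: toNat sums bound by squares
  have habs : ∀ j : Fin (n+1), ((w j).toNat : ℤ) + ((-(w j)).toNat : ℤ) ≤ (w j) ^ 2 := by
    intro j
    rcases eq_or_ne (w j) 0 with h | h
    · simp [h]
    · have h1 : (1 : ℤ) ≤ |w j| := Int.one_le_abs (by simpa using h)
      have h2 : ((w j).toNat : ℤ) + ((-(w j)).toNat : ℤ) = |w j| := by
        rw [abs_eq_max_neg]; omega
      rw [h2, ← sq_abs]
      nlinarith
  set Np : ℕ := ∑ j, (w j).toNat with hNp
  set Nm : ℕ := ∑ j, (-(w j)).toNat with hNm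
  have hNpm : Np = Nm := by
    have : (Np : ℤ) - (Nm : ℤ) = ∑ j, w j := by
      push_cast [hNp, hNm]
      rw [← Finset.sum_sub_distrib]
      apply Finset.sum_congr rfl
      intro j _
      exact Int.toNat_sub_toNat_neg (w j)
    omega
  have hNbound : (Np : ℤ) + (Nm : ℤ) < 2 * m := by
    calc (Np : ℤ) + (Nm : ℤ) = ∑ j, (((w j).toNat : ℤ) + ((-(w j)).toNat : ℤ)) := by
          push_cast [hNp, hNm]; rw [Finset.sum_add_distrib]
    _ ≤ ∑ j, (w j) ^ 2 := Finset.sum_le_sum (fun j _ => habs j)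
    _ < 2 * m := hcon
  have hNm1 : Np ≤ m - 1 := by omega
  classical
  -- multisets
  set Sp : Multiset (Fin (n+1)) := ∑ j : Fin (n+1), Multiset.replicate (w j).toNat j with hSp
  set Sm : Multiset (Fin (n+1)) := ∑ j : Fin (n+1), Multiset.replicate (-(w j)).toNat j with hSm
  set c : Fin (n+1) → ZMod l := fun j => ((j : ℕ) : ZMod l) with hc
  have hinj : Function.Injective c := by
    intro a b hab
    have ha : ((a : ℕ) : ZMod l).val = (a : ℕ) := ZMod.val_cast_of_lt (lt_of_lt_of_le a.isLt hl)
    have hb : ((b : ℕ) : ZMod l).val = (b : ℕ) := ZMod.val_cast_of_lt (lt_of_lt_of_le b.isLt hl)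
    have : (a : ℕ) = (b : ℕ) := by rw [← ha, ← hb]; exact congrArg ZMod.val hab
    exact Fin.ext this
  -- descFactorial congruences for all i < m (incl. i = 0 from exact sum)
  have hdesc : ∀ i : ℕ, i < m →
      (∑ j : Fin (n+1), ((w j : ZMod l) * ((j : ℕ).descFactorial i : ZMod l))) = 0 := by
    intro i him
    rcases Nat.eq_zero_or_pos i with h | h
    · subst h
      simp only [Nat.descFactorial_zero, Nat.cast_one, mul_one]
      have : ((∑ j, w j : ℤ) : ZMod l) = 0 := by rw [h0]; simp
      simpa [Int.cast_sum] using this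
    · have := hmod i h him
      rw [derAt1_apply] at this
      push_cast at this
      rw [← this]
      apply Finset.sum_congr rfl
      intro j _; ring
  have hpow := psum_zero_of_desc (l := l) (m := m) w hdesc
  -- power sums of mapped multisets
  have hmapone : ∀ (S : Multiset (Fin (n+1))) (i : ℕ), ((S.map c).map (· ^ i)).sum
      = (S.map (fun j => (c j) ^ i)).sum := by
    intro S i; rw [Multiset.map_map]; rfl
  have hsum_eval : ∀ (f : Fin (n+1) → ℕ) (i : ℕ),
      (((∑ j : Fin (n+1), Multiset.replicate (f j) j).map (fun j => (c j) ^ i))).sum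
      = ∑ j : Fin (n+1), (f j : ZMod l) * (c j) ^ i := by
    intro f i
    rw [map_sum_finset_sum]
    apply Finset.sum_congr rfl
    intro j _
    rw [Multiset.map_replicate, Multiset.sum_replicate, nsmul_eq_mul]
  have hmapsum : ∀ (i : ℕ), ((Sp.map c).map (· ^ i)).sum - ((Sm.map c).map (· ^ i)).sum
      = ∑ j : Fin (n+1), (w j : ZMod l) * (c j) ^ i := by
    intro i
    rw [hmapone, hmapone, hSp, hSm, hsum_eval, hsum_eval, ← Finset.sum_sub_distrib]
    apply Finset.sum_congr rfl
    intro j _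
    have : ((w j).toNat : ZMod l) - (((-(w j)).toNat : ℕ) : ZMod l) = ((w j : ℤ) : ZMod l) := by
      have h := Int.toNat_sub_toNat_neg (w j)
      calc ((w j).toNat : ZMod l) - (((-(w j)).toNat : ℕ) : ZMod l)
          = ((((w j).toNat : ℤ) - ((-(w j)).toNat : ℤ) : ℤ) : ZMod l) := by push_cast; ring
      _ = ((w j : ℤ) : ZMod l) := by rw [h]
    rw [← this]; ring
  -- cards
  have hcardp : Multiset.card (Sp.map c) = Np := by
    rw [Multiset.card_map, hSp, card_finset_sum]
    simp [hNp]
  have hcardm : Multiset.card (Sm.map c) = Np := by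
    rw [Multiset.card_map, hSm, card_finset_sum, hNpm]
    simp [hNm]
  have hml : m - 1 < l := by omega
  have heq : Sp.map c = Sm.map c := by
    apply multiset_eq_of_psum_eq' Np _ _ hcardp hcardm
    · intro i hi hiN
      intro hcast
      rw [ZMod.natCast_eq_zero_iff] at hcast
      have := Nat.le_of_dvd hi hcast
      omega
    · intro i hi hiN
      have hzero := hpow i (by omega)
      have := hmapsum i
      rw [hzero] at this
      exact sub_eq_zero.mp this
  have hSpm : Sp = Sm := Multiset.map_injective hinj heq
  have hwz : ∀ j : Fin (n+1), w j = 0 := by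
    intro j
    have hcp : Multiset.count j Sp = (w j).toNat := by
      rw [hSp, Multiset.count_sum']
      simp [Multiset.count_replicate]
    have hcm : Multiset.count j Sm = (-(w j)).toNat := by
      rw [hSm, Multiset.count_sum']
      simp [Multiset.count_replicate]
    have := hcp ▸ hcm ▸ congrArg (Multiset.count j) hSpm
    omega
  exact hw (funext hwz)

def craigG (n m l : ℕ) (C : Submodule (ZMod 2) (Fin n → ZMod 2)) :
    AddSubgroup (Fin (n+1) → ℤ) where
  carrier := {v | derAt1 n 0 v = 0 ∧ (fun j : Fin n => ((v j.castSucc : ℤ) : ZMod 2)) ∈ C ∧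
    ∀ i : ℕ, 0 < i → i < m → ((derAt1 n i v : ℤ) : ZMod l) = 0}
  zero_mem' := by
    refine ⟨by simp, ?_, ?_⟩
    · have : (fun j : Fin n => (((0 : Fin (n+1) → ℤ) j.castSucc : ℤ) : ZMod 2)) = 0 := by
        funext j; simp
      rw [this]; exact C.zero_mem
    · intro i _ _; simp
  add_mem' := by
    rintro a b ⟨ha0, ha1, ha2⟩ ⟨hb0, hb1, hb2⟩
    refine ⟨by rw [map_add, ha0, hb0, add_zero], ?_, ?_⟩
    · have : (fun j : Fin n => (((a + b) j.castSucc : ℤ) : ZMod 2))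
          = (fun j : Fin n => ((a j.castSucc : ℤ) : ZMod 2))
            + (fun j : Fin n => ((b j.castSucc : ℤ) : ZMod 2)) := by
        funext j; simp [Pi.add_apply]
      rw [this]; exact C.add_mem ha1 hb1
    · intro i h1 h2
      rw [map_add]; push_cast
      rw [ha2 i h1 h2, hb2 i h1 h2, add_zero]
  neg_mem' := by
    rintro a ⟨ha0, ha1, ha2⟩
    refine ⟨by rw [map_neg, ha0, neg_zero], ?_, ?_⟩
    · have : (fun j : Fin n => (((-a) j.castSucc : ℤ) : ZMod 2))
          = -(fun j : Fin n => ((a j.castSucc : ℤ) : ZMod 2)) := by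
        funext j; simp [Pi.neg_apply]
      rw [this]; exact C.neg_mem ha1
    · intro i h1 h2
      rw [map_neg]; push_cast
      rw [ha2 i h1 h2, neg_zero]

lemma craig_norm_bound (n m l : ℕ) (hm : 0 < m) (hm2 : 2 * m ≤ n + 1) (hl : n + 1 ≤ l)
    (hlp : l.Prime) (hlodd : Odd l) (C : Submodule (ZMod 2) (Fin n → ZMod 2))
    (hd : ∀ c ∈ C, c ≠ 0 → 8 * m ≤ hammingNorm c)
    (v : Fin (n+1) → ℤ) (hv : v ∈ craigG n m l C) (hv0 : v ≠ 0) :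
    (8 * m : ℤ) ≤ ∑ j, (v j) ^ 2 := by
  haveI : Fact (Nat.Prime l) := ⟨hlp⟩
  obtain ⟨h0, hC, hmod⟩ := hv
  set c : Fin n → ZMod 2 := fun j => ((v j.castSucc : ℤ) : ZMod 2) with hcdef
  rcases eq_or_ne c 0 with hc0 | hcne
  · -- v is even
    have heven : ∀ j : Fin (n+1), (2 : ℤ) ∣ v j := by
      have hfirst : ∀ j : Fin n, (2 : ℤ) ∣ v j.castSucc := by
        intro j
        have : ((v j.castSucc : ℤ) : ZMod 2) = 0 := by
          have := congrFun hc0 j; simpa [hcdef] using this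
        exact_mod_cast (ZMod.intCast_zmod_eq_zero_iff_dvd _ 2).mp this
      have hlast : (2 : ℤ) ∣ v (Fin.last n) := by
        have hsum : ∑ j, v j = 0 := by rw [← derAt1_zero_apply n v, h0]
        have : ((v (Fin.last n) : ℤ) : ZMod 2) = 0 := by
          have hcast : ((∑ j, v j : ℤ) : ZMod 2) = 0 := by rw [hsum]; simp
          rw [Int.cast_sum, Fin.sum_univ_castSucc] at hcast
          have hz : ∀ j : Fin n, ((v j.castSucc : ℤ) : ZMod 2) = 0 := by
            intro j; have := congrFun hc0 j; simpa [hcdef] using this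
          rw [Finset.sum_congr rfl (fun j _ => hz j), Finset.sum_const_zero, zero_add] at hcast
          exact hcast
        exact_mod_cast (ZMod.intCast_zmod_eq_zero_iff_dvd _ 2).mp this
      intro j
      induction j using Fin.lastCases with
      | last => exact hlast
      | cast j => exact hfirst j
    choose w hw using heven
    have hvw : v = fun j => 2 * w j := funext hw
    have hw0 : w ≠ 0 := by
      intro h; apply hv0; rw [hvw, h]; funext j; simp
    have hsumw : ∑ j, w j = 0 := by
      have : (2 : ℤ) * ∑ j, w j = 0 := by
        rw [Finset.mul_sum]
        have : ∑ j, 2 * w j = ∑ j, v j := Finset.sum_congr rfl (fun j _ => (hw j).symm)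
        rw [this, ← derAt1_zero_apply n v, h0]
      exact by linarith [this]
    have h2l : (2 : ZMod l) ≠ 0 := by
      intro h
      have : ((2:ℕ) : ZMod l) = 0 := by exact_mod_cast h
      rw [ZMod.natCast_eq_zero_iff] at this
      have := (Nat.prime_dvd_prime_iff_eq hlp Nat.prime_two).mp this
      subst this
      have h2 := Nat.odd_iff.mp hlodd
      norm_num at h2
    have hmodw : ∀ i : ℕ, 0 < i → i < m → ((derAt1 n i w : ℤ) : ZMod l) = 0 := by
      intro i h1 h2
      have hline : derAt1 n i v = 2 * derAt1 n i w := by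
        rw [derAt1_apply, derAt1_apply, Finset.mul_sum]
        apply Finset.sum_congr rfl
        intro j _
        rw [hw j]; ring
      have := hmod i h1 h2
      rw [hline] at this
      push_cast at this
      rcases mul_eq_zero.mp this with h | h
      · exact absurd h h2l
      · exact h
    have hcb := craig_bound n m l hm hm2 hl hlp w hw0 hsumw hmodw
    have : ∑ j, (v j) ^ 2 = 4 * ∑ j, (w j) ^ 2 := by
      rw [Finset.mul_sum]
      apply Finset.sum_congr rfl
      intro j _
      rw [hw j]; ring
    rw [this]
    linarith
  · -- code part nonzero
    have h8m := hd c hC hcne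
    classical
    have hnorm : (hammingNorm c : ℤ) ≤ ∑ j : Fin n, (v j.castSucc) ^ 2 := by
      rw [hammingNorm]
      calc ((univ.filter (fun j => c j ≠ 0)).card : ℤ)
          = ∑ j ∈ univ.filter (fun j => c j ≠ 0), 1 := by simp
      _ ≤ ∑ j ∈ univ.filter (fun j => c j ≠ 0), (v j.castSucc) ^ 2 := by
          apply Finset.sum_le_sum
          intro j hj
          rw [Finset.mem_filter] at hj
          have : v j.castSucc ≠ 0 := by
            intro h
            apply hj.2
            simp [hcdef, h]
          have h1 : (1 : ℤ) ≤ |v j.castSucc| := Int.one_le_abs (by simpa using this)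
          calc (1:ℤ) ≤ |v j.castSucc| := h1
          _ ≤ |v j.castSucc| ^ 2 := by nlinarith
          _ = (v j.castSucc) ^ 2 := sq_abs _
      _ ≤ ∑ j : Fin n, (v j.castSucc) ^ 2 := by
          apply Finset.sum_le_sum_of_subset_of_nonneg (Finset.filter_subset _ _)
          intro j _ _
          positivity
    calc (8 * m : ℤ) ≤ (hammingNorm c : ℤ) := by exact_mod_cast h8m
    _ ≤ ∑ j : Fin n, (v j.castSucc) ^ 2 := hnorm
    _ ≤ ∑ j : Fin (n+1), (v j) ^ 2 := by
        rw [Fin.sum_univ_castSucc]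
        nlinarith [sq_nonneg (v (Fin.last n))]

lemma derAt1_single (n i : ℕ) (j : Fin (n+1)) :
    derAt1 n i (Pi.single j 1) = ((j : ℕ).descFactorial i : ℤ) := by
  classical
  rw [derAt1_apply]
  rw [Finset.sum_eq_single j]
  · simp
  · intro b _ hb; simp [Pi.single_apply, hb.symm, Ne.symm hb]
  · simp

-- the mod-2 truncation hom
def phi2 (n : ℕ) : (Fin (n+1) → ℤ) →+ (Fin n → ZMod 2) where
  toFun v := fun j => ((v j.castSucc : ℤ) : ZMod 2)
  map_zero' := by funext j; simp
  map_add' a b := by funext j; push_cast [Pi.add_apply]; ring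

-- the mod-l derivative hom
noncomputable def phil (n m l : ℕ) : (Fin (n+1) → ℤ) →+ (Fin (m-1) → ZMod l) where
  toFun v := fun i => ((derAt1 n ((i : ℕ)+1) v : ℤ) : ZMod l)
  map_zero' := by funext i; simp
  map_add' a b := by
    funext i
    show (((derAt1 n ((i:ℕ)+1)) (a+b) : ℤ) : ZMod l) = _
    rw [map_add]
    push_cast
    rfl

lemma phi2_apply (n : ℕ) (v : Fin (n+1) → ℤ) (j : Fin n) :
    phi2 n v j = ((v j.castSucc : ℤ) : ZMod 2) := rfl

lemma phil_apply (n m l : ℕ) (v : Fin (n+1) → ℤ) (i : Fin (m-1)) :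
    phil n m l v i = ((derAt1 n ((i : ℕ)+1) v : ℤ) : ZMod l) := rfl

lemma phi2_surj_on_root (n : ℕ) (a : Fin n → ZMod 2) :
    ∃ v : Fin (n+1) → ℤ, derAt1 n 0 v = 0 ∧ phi2 n v = a := by
  refine ⟨Fin.snoc (fun j => ((a j).val : ℤ)) (-∑ j, ((a j).val : ℤ)), ?_, ?_⟩
  · rw [derAt1_apply]
    simp only [Nat.descFactorial_zero, Nat.cast_one, one_mul]
    rw [Fin.sum_univ_castSucc]
    simp [Fin.snoc_castSucc, Fin.snoc_last]
  · funext j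
    show (((Fin.snoc (fun j => ((a j).val : ℤ)) (-∑ j, ((a j).val : ℤ)) : Fin (n+1) → ℤ) j.castSucc : ℤ) : ZMod 2) = a j
    rw [Fin.snoc_castSucc]
    push_cast [ZMod.natCast_val, ZMod.cast_id]
    rfl

lemma phil_surj_on_root (n m l : ℕ) (hm : 0 < m) (hm2 : 2 * m ≤ n + 1) (hl : n + 1 ≤ l)
    (hlp : l.Prime) (b : Fin (m-1) → ZMod l) :
    ∃ v : Fin (n+1) → ℤ, derAt1 n 0 v = 0 ∧ phil n m l v = b := by
  classical
  haveI : Fact (Nat.Prime l) := ⟨hlp⟩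
  have hn : 1 ≤ n := by omega
  have hemb : ∀ t : Fin (m-1), (t : ℕ) + 1 < n + 1 := by
    intro t; have := t.isLt; omega
  set emb : Fin (m-1) → Fin (n+1) := fun t => ⟨(t : ℕ) + 1, hemb t⟩ with hembdef
  set M : Matrix (Fin (m-1)) (Fin (m-1)) (ZMod l) :=
    fun i t => (((t : ℕ) + 1).descFactorial ((i : ℕ) + 1) : ZMod l) with hM
  have hMtri : M.BlockTriangular id := by
    intro i t hlt
    simp only [id_eq] at hlt
    have : (t : ℕ) + 1 < (i : ℕ) + 1 := by exact_mod_cast Nat.add_lt_add_right hlt 1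
    have hd0 : ((t:ℕ)+1).descFactorial ((i:ℕ)+1) = 0 := Nat.descFactorial_eq_zero_iff_lt.mpr this
    rw [hM]
    show ((((t:ℕ)+1).descFactorial ((i:ℕ)+1) : ℕ) : ZMod l) = 0
    rw [hd0]; simp
  have hdiag : ∀ i : Fin (m-1), M i i ≠ 0 := by
    intro i
    rw [hM]
    simp only [Nat.descFactorial_self]
    intro h
    rw [ZMod.natCast_eq_zero_iff] at h
    rw [Nat.Prime.dvd_factorial hlp] at h
    have := i.isLt; omega
  have hdet : IsUnit M.det := by
    rw [Matrix.det_of_upperTriangular hMtri]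
    exact (Finset.prod_ne_zero_iff.mpr (fun i _ => hdiag i)).isUnit
  set x : Fin (m-1) → ZMod l := M⁻¹.mulVec b with hx
  have hMx : M.mulVec x = b := by
    rw [hx, Matrix.mulVec_mulVec, Matrix.mul_nonsing_inv M hdet, Matrix.one_mulVec]
  set v : Fin (n+1) → ℤ :=
    ∑ t : Fin (m-1), ((x t).val : ℤ) • (Pi.single (emb t) 1 - Pi.single 0 1) with hv
  have hker : derAt1 n 0 v = 0 := by
    rw [hv, map_sum]
    apply Finset.sum_eq_zero
    intro t _
    rw [map_smul, map_sub, derAt1_single, derAt1_single]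
    simp
  refine ⟨v, hker, ?_⟩
  funext i
  show ((derAt1 n ((i:ℕ)+1) v : ℤ) : ZMod l) = b i
  rw [hv, map_sum, Int.cast_sum]
  have hterm : ∀ t : Fin (m-1),
      ((derAt1 n ((i:ℕ)+1) (((x t).val : ℤ) • (Pi.single (emb t) 1 - Pi.single 0 1)) : ℤ) : ZMod l)
      = x t * M i t := by
    intro t
    rw [map_smul, map_sub, derAt1_single, derAt1_single]
    have h0 : ((0 : Fin (n+1)) : ℕ) = 0 := rfl
    have hzero : ((((0 : Fin (n+1)) : ℕ)).descFactorial ((i:ℕ)+1) : ℤ) = 0 := by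
      rw [h0]; simp [Nat.zero_descFactorial_succ]
    have hembco : ((emb t : Fin (n+1)) : ℕ) = (t : ℕ) + 1 := rfl
    rw [hzero, sub_zero, hembco, smul_eq_mul]
    have hc : ((((x t).val : ℤ) * ((((t:ℕ)+1).descFactorial ((i:ℕ)+1) : ℕ) : ℤ) : ℤ) : ZMod l)
        = ((x t).val : ZMod l) * ((((t:ℕ)+1).descFactorial ((i:ℕ)+1) : ℕ) : ZMod l) := by
      push_cast; ring
    rw [hc, ZMod.natCast_val, ZMod.cast_id, hM]
  rw [Finset.sum_congr rfl (fun t _ => hterm t)]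
  have : ∑ t, x t * M i t = M.mulVec x i := by
    rw [Matrix.mulVec, dotProduct]
    apply Finset.sum_congr rfl
    intro t _; ring
  rw [this, hMx]

lemma mem_craigG (n m l : ℕ) (C : Submodule (ZMod 2) (Fin n → ZMod 2)) (v : Fin (n+1) → ℤ) :
    v ∈ craigG n m l C ↔ (derAt1 n 0 v = 0 ∧ (fun j : Fin n => ((v j.castSucc : ℤ) : ZMod 2)) ∈ C ∧
    ∀ i : ℕ, 0 < i → i < m → ((derAt1 n i v : ℤ) : ZMod l) = 0) := Iff.rfl

lemma craig_index (n m l k : ℕ) (hm : 0 < m) (hm2 : 2 * m ≤ n + 1) (hl : n + 1 ≤ l)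
    (hlp : l.Prime) (hlodd : Odd l) (C : Submodule (ZMod 2) (Fin n → ZMod 2))
    (hk : Module.finrank (ZMod 2) C = k) :
    ((craigG n m l C).addSubgroupOf ((rootLat n).toAddSubgroup)).index
      = 2 ^ (n - k) * l ^ (m - 1) := by
  classical
  haveI : Fact (Nat.Prime l) := ⟨hlp⟩
  haveI : NeZero l := ⟨hlp.pos.ne'⟩
  set R : AddSubgroup (Fin (n+1) → ℤ) := (rootLat n).toAddSubgroup with hR
  set f : (Fin (n+1) → ℤ) →+ ((Fin n → ZMod 2) ⧸ C) :=
    (C.mkQ.toAddMonoidHom.comp (phi2 n)) with hf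
  set Φ : ↥R →+ (((Fin n → ZMod 2) ⧸ C) × (Fin (m-1) → ZMod l)) :=
    (f.prod (phil n m l)).comp R.subtype with hΦ
  -- kernel identification
  have hΦap : ∀ x : ↥R, Φ x = (C.mkQ (phi2 n ↑x), phil n m l ↑x) := fun x => rfl
  have hker : Φ.ker = (craigG n m l C).addSubgroupOf R := by
    ext x
    rw [AddMonoidHom.mem_ker, AddSubgroup.mem_addSubgroupOf, hΦap, Prod.mk_eq_zero,
      mem_craigG]
    have hx0 : derAt1 n 0 (x : Fin (n+1) → ℤ) = 0 := x.2
    have hmk : C.mkQ (phi2 n ↑x) = 0 ↔ (fun j : Fin n => (((x : Fin (n+1) → ℤ) j.castSucc : ℤ) : ZMod 2)) ∈ C := by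
      rw [Submodule.mkQ_apply, Submodule.Quotient.mk_eq_zero]
      exact Iff.rfl
    rw [hmk]
    constructor
    · rintro ⟨h1, h2⟩
      refine ⟨hx0, h1, ?_⟩
      intro i hi him
      have hfin : i - 1 < m - 1 := by omega
      have hcf := congrFun h2 (⟨i - 1, hfin⟩ : Fin (m-1))
      rw [phil_apply] at hcf
      have hi1 : (i - 1) + 1 = i := by omega
      simp only [hi1] at hcf
      exact hcf
    · rintro ⟨-, h1, h2⟩
      refine ⟨h1, ?_⟩
      funext i
      rw [phil_apply]
      exact h2 ((i : ℕ) + 1) (by omega) (by have := i.isLt; omega)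
  -- surjectivity
  have hsurj : Function.Surjective Φ := by
    rintro ⟨qa, qb⟩
    obtain ⟨a, rfl⟩ := Submodule.Quotient.mk_surjective C qa
    obtain ⟨v1, hv10, hv1a⟩ := phi2_surj_on_root n a
    obtain ⟨v2, hv20, hv2b⟩ := phil_surj_on_root n m l hm hm2 hl hlp qb
    set x1 : ↥R := ⟨v1, by rw [hR]; exact LinearMap.mem_ker.mpr hv10⟩ with hx1
    set x2 : ↥R := ⟨v2, by rw [hR]; exact LinearMap.mem_ker.mpr hv20⟩ with hx2
    refine ⟨l • x1 + (l + 1) • x2, ?_⟩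
    have hcast2 : ((l : ℕ) : ZMod 2) = 1 := by
      rw [← ZMod.natCast_mod, Nat.odd_iff.mp hlodd, Nat.cast_one]
    have hcast2' : (((l + 1 : ℕ)) : ZMod 2) = 0 := by
      have : (l + 1) % 2 = 0 := by have := Nat.odd_iff.mp hlodd; omega
      rw [← ZMod.natCast_mod, this, Nat.cast_zero]
    have hodd_smul : ∀ p : (Fin n → ZMod 2) ⧸ C, l • p = p := by
      intro p
      rw [← Nat.cast_smul_eq_nsmul (ZMod 2), hcast2, one_smul]
    have heven_smul : ∀ p : (Fin n → ZMod 2) ⧸ C, (l + 1) • p = 0 := by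
      intro p
      rw [← Nat.cast_smul_eq_nsmul (ZMod 2), hcast2', zero_smul]
    have hl_smul : ∀ q : Fin (m-1) → ZMod l, l • q = 0 := by
      intro q
      rw [← Nat.cast_smul_eq_nsmul (ZMod l), ZMod.natCast_self, zero_smul]
    have hl1_smul : ∀ q : Fin (m-1) → ZMod l, (l + 1) • q = q := by
      intro q
      rw [← Nat.cast_smul_eq_nsmul (ZMod l)]
      push_cast [ZMod.natCast_self]
      simp
    rw [map_add, map_nsmul, map_nsmul]
    have hΦ1 : Φ x1 = (Submodule.Quotient.mk a, phil n m l v1) := by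
      rw [hΦap]
      have h : C.mkQ (phi2 n v1) = Submodule.Quotient.mk a := by rw [hv1a]; rfl
      exact congrArg (fun z => (z, phil n m l v1)) h
    have hΦ2 : Φ x2 = (C.mkQ (phi2 n v2), qb) := by
      rw [hΦap]
      exact congrArg (fun z => (C.mkQ (phi2 n v2), z)) hv2b
    rw [hΦ1, hΦ2, Prod.smul_mk, Prod.smul_mk, Prod.mk_add_mk,
      hodd_smul, hl_smul, heven_smul, hl1_smul, add_zero, zero_add]
  -- index computation
  have hrange : Φ.range = ⊤ := AddMonoidHom.range_eq_top.mpr hsurj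
  rw [← hker, AddSubgroup.index_ker, hrange]
  have htop : Nat.card (⊤ : AddSubgroup (((Fin n → ZMod 2) ⧸ C) × (Fin (m-1) → ZMod l)))
      = Nat.card (((Fin n → ZMod 2) ⧸ C) × (Fin (m-1) → ZMod l)) :=
    Nat.card_congr AddSubgroup.topEquiv.toEquiv
  rw [htop, Nat.card_prod]
  have hkn : k ≤ n := by
    rw [← hk]
    have := Submodule.finrank_le C
    simpa [Module.finrank_pi] using this
  have hcardC : Nat.card ↥C = 2 ^ k := by
    haveI : Fintype ↥C := Fintype.ofFinite _
    rw [Nat.card_eq_fintype_card, Module.card_eq_pow_finrank (K := ZMod 2), hk, ZMod.card]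
  have hcardAmb : Nat.card (Fin n → ZMod 2) = 2 ^ n := by
    simp [Nat.card_eq_fintype_card, ZMod.card]
  have hcardQuot : Nat.card ((Fin n → ZMod 2) ⧸ C) = 2 ^ (n - k) := by
    have heq := Submodule.card_eq_card_quotient_mul_card C
    rw [hcardAmb, hcardC] at heq
    have h2 : (2:ℕ) ^ n = 2 ^ (n - k) * 2 ^ k := by
      rw [← pow_add]
      congr 1
      omega
    have h3 : 2 ^ (n - k) * 2 ^ k = Nat.card ((Fin n → ZMod 2) ⧸ C) * 2 ^ k := by
      rw [← h2, heq]; ring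
    exact (Nat.eq_of_mul_eq_mul_right (pow_pos two_pos k) h3).symm
  rw [hcardQuot]
  congr 1
  simp [Nat.card_eq_fintype_card, ZMod.card]

lemma density_calc (n m l k : ℕ) (hkn : k ≤ n) :
    (Real.sqrt (8 * m) / 2) ^ n / ((2 : ℝ) ^ (n - k) * (l : ℝ) ^ (m - 1) * Real.sqrt (n + 1))
      ≥ (2 : ℝ) ^ ((k : ℝ) - (n : ℝ) / 2) * (m : ℝ) ^ ((n : ℝ) / 2)
          / ((l : ℝ) ^ (m - 1) * Real.sqrt (n + 1)) := by
  have h2m : (0:ℝ) ≤ 2 * (m:ℝ) := by positivity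
  have hsqrt : Real.sqrt (8 * m) / 2 = Real.sqrt (2 * m) := by
    have : (8 : ℝ) * m = 4 * (2 * m) := by ring
    rw [this, Real.sqrt_mul (by norm_num : (0:ℝ) ≤ 4),
      show Real.sqrt 4 = 2 by
        rw [show (4:ℝ) = 2^2 by norm_num, Real.sqrt_sq (by norm_num : (0:ℝ) ≤ 2)]]
    ring
  have hpow : (Real.sqrt (2 * m)) ^ n = (2:ℝ) ^ ((n:ℝ)/2) * (m:ℝ) ^ ((n:ℝ)/2) := by
    rw [Real.sqrt_eq_rpow, ← Real.rpow_natCast (((2:ℝ)*m) ^ ((1:ℝ)/2)) n,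
      ← Real.rpow_mul h2m, Real.mul_rpow (by norm_num) (by positivity)]
    norm_num
    ring_nf
  have hsplit : (2:ℝ) ^ ((n:ℝ)/2) = (2:ℝ) ^ ((k:ℝ) - (n:ℝ)/2) * (2:ℝ) ^ ((n - k : ℕ)) := by
    rw [← Real.rpow_natCast (2:ℝ) (n-k), ← Real.rpow_add (by norm_num : (0:ℝ) < 2)]
    congr 1
    push_cast [Nat.cast_sub hkn]
    ring
  apply ge_of_eq
  rw [hsqrt, hpow, hsplit]
  rw [show (2:ℝ) ^ ((k:ℝ) - (n:ℝ)/2) * (2:ℝ) ^ ((n - k : ℕ)) * (m:ℝ) ^ ((n:ℝ)/2)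
      = (2:ℝ) ^ ((n - k : ℕ)) * ((2:ℝ) ^ ((k:ℝ) - (n:ℝ)/2) * (m:ℝ) ^ ((n:ℝ)/2)) by ring,
    mul_assoc ((2:ℝ) ^ ((n - k : ℕ))) ((l:ℝ) ^ (m-1)) (Real.sqrt (n+1)),
    mul_div_mul_left _ _ (by positivity : ((2:ℝ) ^ ((n - k : ℕ))) ≠ 0)]

/-- If a binary linear `[n, k, 8m]` code exists (with `m ≤ (n+1)/2` and `l ≥ n+1` an odd
prime), then there exists a rank-`n` lattice with minimum squared norm at least `8m` and
volume `2^{n-k} l^{m-1} (n+1)^{1/2}` (index `2^{n-k} l^{m-1}` in the root lattice `A_n`),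
hence of center density at least `2^{k-n/2} m^{n/2} / (l^{m-1}(n+1)^{1/2})`. -/
theorem code_to_lattice (n m l k : ℕ) (hm : 0 < m) (hm2 : 2 * m ≤ n + 1)
    (hl : n + 1 ≤ l) (hlp : l.Prime) (hlodd : Odd l)
    (C : Submodule (ZMod 2) (Fin n → ZMod 2))
    (hk : Module.finrank (ZMod 2) C = k)
    (hd : ∀ c ∈ C, c ≠ 0 → 8 * m ≤ hammingNorm c) :
    ∃ L : Submodule ℤ (Fin (n + 1) → ℤ), L ≤ rootLat n ∧
      (∀ v ∈ L, v ≠ 0 → (8 * m : ℤ) ≤ ∑ j, (v j) ^ 2) ∧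
      ((L.toAddSubgroup).addSubgroupOf ((rootLat n).toAddSubgroup)).index
        = 2 ^ (n - k) * l ^ (m - 1) ∧
      (Real.sqrt (8 * m) / 2) ^ n / ((2 : ℝ) ^ (n - k) * (l : ℝ) ^ (m - 1) * Real.sqrt (n + 1))
        ≥ (2 : ℝ) ^ ((k : ℝ) - (n : ℝ) / 2) * (m : ℝ) ^ ((n : ℝ) / 2)
            / ((l : ℝ) ^ (m - 1) * Real.sqrt (n + 1)) := by
  refine ⟨AddSubgroup.toIntSubmodule (craigG n m l C), ?_, ?_, ?_, ?_⟩
  · intro v hv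
    have hv' : v ∈ craigG n m l C := hv
    exact LinearMap.mem_ker.mpr hv'.1
  · intro v hv hv0
    exact craig_norm_bound n m l hm hm2 hl hlp hlodd C hd v hv hv0
  · have hG : (AddSubgroup.toIntSubmodule (craigG n m l C)).toAddSubgroup = craigG n m l C := rfl
    rw [hG]
    exact craig_index n m l k hm hm2 hl hlp hlodd C hk
  · have hkn : k ≤ n := by
      rw [← hk]
      have := Submodule.finrank_le C
      simpa [Module.finrank_pi] using this
    exact density_calc n m l k hkn
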